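/- Let W ∈ ℝ^{m×l}, Ψ symmetric positive definite, Σ = (I + Wᵀ Ψ⁻¹ W)⁻¹, and suppose ε_i = v_i − W μ_i satisfy (1/n)Σ_i ε_i ε_iᵀ + W Σ Wᵀ = Ψ. Then (1/n)Σ_i ‖ε_i‖² = tr(Ψ (W Wᵀ + Ψ)⁻¹ Ψ) ≤ tr((W Wᵀ + Ψ)⁻¹) · tr(Ψ)². -/

import Mathlib

open Matrix Finset

lemma psd_diag_nonneg {m : ℕ} {A : Matrix (Fin m) (Fin m) ℝ} (hA : A.PosSemidef)
    (i : Fin m) : 0 ≤ A i i := by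
  have := hA.dotProduct_mulVec_nonneg (Pi.single i 1)
  simpa [dotProduct, Pi.single_apply] using this

lemma psd_sq_apply_le {m : ℕ} {A : Matrix (Fin m) (Fin m) ℝ} (hA : A.PosSemidef)
    (i j : Fin m) : (A i j) ^ 2 ≤ A i i * A j j := by
  rcases eq_or_ne i j with rfl | hij
  · nlinarith [psd_diag_nonneg hA i]
  · have hsymm : A j i = A i j := by
      have := congrFun (congrFun hA.1 i) j
      simpa [Matrix.conjTranspose_apply] using this
    have hq : ∀ t : ℝ, 0 ≤ A i i * (t * t) + (2 * A i j) * t + A j j := by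
      intro t
      have h := hA.dotProduct_mulVec_nonneg (fun k => t * (if k = i then 1 else 0) + (if k = j then 1 else 0))
      simp only [dotProduct, mulVec, star_trivial] at h
      have hinner : ∀ x, (∑ y, A x y * (t * (if y = i then 1 else 0) + (if y = j then 1 else 0)))
          = t * A x i + A x j := by
        intro x
        simp [Finset.sum_add_distrib, mul_add, Finset.mul_sum, mul_comm, mul_ite]
      rw [show (∑ x, (t * (if x = i then 1 else 0) + (if x = j then 1 else 0)) *
            ∑ y, A x y * (t * (if y = i then 1 else 0) + (if y = j then 1 else 0)))
          = ∑ x, (t * (if x = i then 1 else 0) + (if x = j then 1 else 0)) *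
            (t * A x i + A x j) from Finset.sum_congr rfl (fun x _ => by rw [hinner])] at h
      simp only [add_mul, mul_ite, ite_mul, one_mul, zero_mul, mul_zero, mul_one,
        Finset.sum_add_distrib, Finset.sum_ite_eq', Finset.mem_univ, if_true] at h
      calc (0:ℝ) ≤ _ := h
        _ = A i i * (t * t) + (2 * A i j) * t + A j j := by rw [← hsymm]; ring
    have hd := discrim_le_zero hq
    unfold discrim at hd
    nlinarith

lemma trace_mul_le_trace_mul_trace {m : ℕ} {A B : Matrix (Fin m) (Fin m) ℝ}
    (hA : A.PosSemidef) (hB : B.PosSemidef) : (A * B).trace ≤ A.trace * B.trace := by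
  have hBsymm : ∀ i j, B j i = B i j := fun i j => by
    have := congrFun (congrFun hB.1 i) j
    simpa [Matrix.conjTranspose_apply] using this
  have key : ∀ i j, A i j * B j i ≤
      Real.sqrt (A i i * B i i) * Real.sqrt (A j j * B j j) := by
    intro i j
    have h1 : (A i j * B j i) ^ 2 ≤ (A i i * B i i) * (A j j * B j j) := by
      have := psd_sq_apply_le hA i j
      have := psd_sq_apply_le hB i j
      rw [hBsymm i j]
      nlinarith [sq_nonneg (A i j), sq_nonneg (B i j)]
    calc A i j * B j i ≤ |A i j * B j i| := le_abs_self _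
      _ = Real.sqrt ((A i j * B j i) ^ 2) := by rw [Real.sqrt_sq_eq_abs]
      _ ≤ Real.sqrt ((A i i * B i i) * (A j j * B j j)) := Real.sqrt_le_sqrt h1
      _ = _ := Real.sqrt_mul (mul_nonneg (psd_diag_nonneg hA i) (psd_diag_nonneg hB i)) _
  have htr : (A * B).trace = ∑ i, ∑ j, A i j * B j i := by
    simp [Matrix.trace, Matrix.diag, Matrix.mul_apply]
  rw [htr]
  calc ∑ i, ∑ j, A i j * B j i
      ≤ ∑ i, ∑ j, Real.sqrt (A i i * B i i) * Real.sqrt (A j j * B j j) := by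
        apply Finset.sum_le_sum; intro i _; apply Finset.sum_le_sum; intro j _; exact key i j
    _ = (∑ i, Real.sqrt (A i i * B i i)) ^ 2 := by
        rw [sq, Finset.sum_mul_sum]
    _ ≤ (∑ i, A i i) * (∑ i, B i i) := by
        apply Finset.sum_sq_le_sum_mul_sum_of_sq_eq_mul
        · exact fun i _ => psd_diag_nonneg hA i
        · exact fun i _ => psd_diag_nonneg hB i
        · intro i _
          exact Real.sq_sqrt (mul_nonneg (psd_diag_nonneg hA i) (psd_diag_nonneg hB i))
    _ = A.trace * B.trace := rfl

lemma woodbury_aux {m l : ℕ} (W : Matrix (Fin m) (Fin l) ℝ)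
    (Ψ : Matrix (Fin m) (Fin m) ℝ) (hΨ : Ψ.PosDef) :
    W * ((1 : Matrix (Fin l) (Fin l) ℝ) + Wᵀ * Ψ⁻¹ * W)⁻¹ * Wᵀ =
      Ψ - Ψ * (W * Wᵀ + Ψ)⁻¹ * Ψ := by
  have hWWt : (W * Wᵀ).PosSemidef := by
    have := Matrix.posSemidef_self_mul_conjTranspose W
    simpa [Matrix.conjTranspose_eq_transpose_of_trivial] using this
  have hA : (W * Wᵀ + Ψ).PosDef := Matrix.PosDef.posSemidef_add hWWt hΨ
  have hS : ((1 : Matrix (Fin l) (Fin l) ℝ) + Wᵀ * Ψ⁻¹ * W).PosDef := by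
    apply Matrix.PosDef.add_posSemidef Matrix.PosDef.one
    have := (hΨ.inv.posSemidef).mul_mul_conjTranspose_same Wᵀ
    simpa [Matrix.conjTranspose_eq_transpose_of_trivial] using this
  have hΨu : IsUnit Ψ.det := hΨ.det_pos.ne'.isUnit
  have hAu : IsUnit (W * Wᵀ + Ψ).det := hA.det_pos.ne'.isUnit
  have hSu : IsUnit ((1 : Matrix (Fin l) (Fin l) ℝ) + Wᵀ * Ψ⁻¹ * W).det := hS.det_pos.ne'.isUnit
  have key : W * ((1 : Matrix (Fin l) (Fin l) ℝ) + Wᵀ * Ψ⁻¹ * W) =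
      (W * Wᵀ + Ψ) * (Ψ⁻¹ * W) := by
    simp only [Matrix.mul_add, Matrix.add_mul, Matrix.mul_one, Matrix.mul_assoc,
      Matrix.mul_nonsing_inv_cancel_left _ _ hΨu]
    rw [add_comm]
  have key2 : W * ((1 : Matrix (Fin l) (Fin l) ℝ) + Wᵀ * Ψ⁻¹ * W)⁻¹ =
      Ψ * ((W * Wᵀ + Ψ)⁻¹ * W) := by
    have h1 : (W * Wᵀ + Ψ)⁻¹ * (W * ((1 : Matrix (Fin l) (Fin l) ℝ) + Wᵀ * Ψ⁻¹ * W)) *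
        ((1 : Matrix (Fin l) (Fin l) ℝ) + Wᵀ * Ψ⁻¹ * W)⁻¹ =
        (W * Wᵀ + Ψ)⁻¹ * ((W * Wᵀ + Ψ) * (Ψ⁻¹ * W)) *
        ((1 : Matrix (Fin l) (Fin l) ℝ) + Wᵀ * Ψ⁻¹ * W)⁻¹ := by rw [key]
    rw [Matrix.nonsing_inv_mul_cancel_left _ _ hAu] at h1
    rw [Matrix.mul_assoc ((W * Wᵀ + Ψ)⁻¹) _ _, Matrix.mul_nonsing_inv_cancel_right _ _ hSu,
      Matrix.mul_assoc] at h1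
    rw [h1, Matrix.mul_nonsing_inv_cancel_left _ _ hΨu]
  rw [key2, Matrix.mul_assoc Ψ _ _, Matrix.mul_assoc ((W * Wᵀ + Ψ)⁻¹) W Wᵀ,
    ← Matrix.mul_assoc Ψ _ _]
  have hWW : Ψ * (W * Wᵀ + Ψ)⁻¹ * (W * Wᵀ) =
      Ψ * (W * Wᵀ + Ψ)⁻¹ * ((W * Wᵀ + Ψ) - Ψ) := by rw [add_sub_cancel_right]
  rw [hWW, Matrix.mul_sub, Matrix.nonsing_inv_mul_cancel_right _ _ hAu]

/-- The reconstruction error is quadratic in `Ψ`: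
`(1/n)∑‖εᵢ‖² = tr(Ψ(WWᵀ+Ψ)⁻¹Ψ) ≤ tr((WWᵀ+Ψ)⁻¹)·tr(Ψ)²`. -/
theorem stmt12 (m l n : ℕ) (hn : 0 < n)
    (v : Fin n → Fin m → ℝ) (μ : Fin n → Fin l → ℝ)
    (W : Matrix (Fin m) (Fin l) ℝ)
    (Ψ : Matrix (Fin m) (Fin m) ℝ) (hΨ : Ψ.PosDef)
    (Sig : Matrix (Fin l) (Fin l) ℝ)
    (hSig : Sig = ((1 : Matrix (Fin l) (Fin l) ℝ) + Wᵀ * Ψ⁻¹ * W)⁻¹)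
    (ε : Fin n → Fin m → ℝ) (hε : ∀ i, ε i = v i - W *ᵥ μ i)
    (hfix : (1 / (n : ℝ)) • ∑ i, Matrix.vecMulVec (ε i) (ε i) + W * Sig * Wᵀ = Ψ) :
    (1 / (n : ℝ)) * ∑ i, ∑ k, (ε i k) ^ 2 =
        (Ψ * (W * Wᵀ + Ψ)⁻¹ * Ψ).trace ∧
    (Ψ * (W * Wᵀ + Ψ)⁻¹ * Ψ).trace ≤ ((W * Wᵀ + Ψ)⁻¹).trace * Ψ.trace ^ 2 := by
  have hWWt : (W * Wᵀ).PosSemidef := by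
    have := Matrix.posSemidef_self_mul_conjTranspose W
    simpa [Matrix.conjTranspose_eq_transpose_of_trivial] using this
  have hA : (W * Wᵀ + Ψ).PosDef := Matrix.PosDef.posSemidef_add hWWt hΨ
  have hAinv : ((W * Wᵀ + Ψ)⁻¹).PosSemidef := hA.inv.posSemidef
  constructor
  · have hE : (1 / (n : ℝ)) • ∑ i, Matrix.vecMulVec (ε i) (ε i) = Ψ - W * Sig * Wᵀ :=
      eq_sub_of_add_eq hfix
    have hWood : W * Sig * Wᵀ = Ψ - Ψ * (W * Wᵀ + Ψ)⁻¹ * Ψ := by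
      rw [hSig]; exact woodbury_aux W Ψ hΨ
    have h1 : Ψ - W * Sig * Wᵀ = Ψ * (W * Wᵀ + Ψ)⁻¹ * Ψ := by
      rw [hWood, sub_sub_cancel]
    calc (1 / (n : ℝ)) * ∑ i, ∑ k, (ε i k) ^ 2
        = ((1 / (n : ℝ)) • ∑ i, Matrix.vecMulVec (ε i) (ε i)).trace := by
          rw [Matrix.trace_smul, Matrix.trace_sum]
          simp [Matrix.trace, Matrix.diag, Matrix.vecMulVec_apply, sq, smul_eq_mul]
      _ = (Ψ * (W * Wᵀ + Ψ)⁻¹ * Ψ).trace := by rw [hE, h1]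
  · have hΨΨ : (Ψ * Ψ).PosSemidef := by
      have := Matrix.posSemidef_conjTranspose_mul_self Ψ
      rwa [hΨ.isHermitian] at this
    have hcyc : (Ψ * (W * Wᵀ + Ψ)⁻¹ * Ψ).trace = ((Ψ * Ψ) * (W * Wᵀ + Ψ)⁻¹).trace := by
      rw [Matrix.trace_mul_cycle]
    have h2 : ((Ψ * Ψ) * (W * Wᵀ + Ψ)⁻¹).trace ≤ (Ψ * Ψ).trace * ((W * Wᵀ + Ψ)⁻¹).trace :=
      trace_mul_le_trace_mul_trace hΨΨ hAinv
    have h3 : (Ψ * Ψ).trace ≤ Ψ.trace ^ 2 := by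
      rw [sq]
      exact trace_mul_le_trace_mul_trace hΨ.posSemidef hΨ.posSemidef
    have h4 : 0 ≤ ((W * Wᵀ + Ψ)⁻¹).trace := by
      have : ((W * Wᵀ + Ψ)⁻¹).trace = ∑ i, (W * Wᵀ + Ψ)⁻¹ i i := rfl
      rw [this]
      exact Finset.sum_nonneg fun i _ => psd_diag_nonneg hAinv i
    calc (Ψ * (W * Wᵀ + Ψ)⁻¹ * Ψ).trace
        = ((Ψ * Ψ) * (W * Wᵀ + Ψ)⁻¹).trace := hcyc
      _ ≤ (Ψ * Ψ).trace * ((W * Wᵀ + Ψ)⁻¹).trace := h2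
      _ ≤ Ψ.trace ^ 2 * ((W * Wᵀ + Ψ)⁻¹).trace := mul_le_mul_of_nonneg_right h3 h4
      _ = ((W * Wᵀ + Ψ)⁻¹).trace * Ψ.trace ^ 2 := mul_comm _ _
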